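/- Let A_m denote the Lucas numbers. For all integers j, c and every integer ℓ ≥ 1, A_{2(j + c·2^ℓ)} ≡ (−1)^c · A_{2j} (mod A_{2^ℓ}). -/

import Mathlib

/-- The Lucas numbers `2, 1, 3, 4, 7, …`. -/
def lucasNat : ℕ → ℤ
  | 0 => 2
  | 1 => 1
  | n + 2 => lucasNat (n + 1) + lucasNat n

/-- Fibonacci numbers extended to negative indices by `F₋ₐ = (-1)^(a+1) Fₐ`. -/
def fibZ (n : ℤ) : ℤ :=
  if 0 ≤ n then (Nat.fib n.toNat : ℤ)
  else (-1) ^ ((-n).toNat + 1) * (Nat.fib (-n).toNat : ℤ)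

/-- Lucas numbers extended to negative indices by `A₋ₐ = (-1)^a Aₐ`. -/
def lucasZ (n : ℤ) : ℤ :=
  if 0 ≤ n then lucasNat n.toNat
  else (-1) ^ (-n).toNat * lucasNat (-n).toNat

lemma lucasZ_natCast (n : ℕ) : lucasZ n = lucasNat n := by
  simp [lucasZ]

lemma lucasZ_rec (m : ℤ) : lucasZ (m + 2) = lucasZ (m + 1) + lucasZ m := by
  rcases m with n | n
  · simp only [Int.ofNat_eq_coe]
    have h0 : ((n : ℤ) + 2) = ((n + 2 : ℕ) : ℤ) := by push_cast; ring
    have h1 : ((n : ℤ) + 1) = ((n + 1 : ℕ) : ℤ) := by push_cast; ring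
    rw [h0, h1, lucasZ_natCast, lucasZ_natCast, lucasZ_natCast]
    rfl
  · match n with
    | 0 => decide
    | 1 => decide
    | (k + 2) =>
      have e0 : (Int.negSucc (k + 2) + 2) = -((k + 1 : ℕ) : ℤ) := by
        rw [Int.negSucc_eq]; push_cast; ring
      have e1 : (Int.negSucc (k + 2) + 1) = -((k + 2 : ℕ) : ℤ) := by
        rw [Int.negSucc_eq]; push_cast; ring
      have e2 : (Int.negSucc (k + 2)) = -((k + 3 : ℕ) : ℤ) := by
        rw [Int.negSucc_eq]; push_cast; ring
      rw [e0, e1, e2]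
      have neg : ∀ a : ℕ, 1 ≤ a → lucasZ (-(a : ℤ)) = (-1) ^ a * lucasNat a := by
        intro a ha
        have : ¬ (0 ≤ -(a : ℤ)) := by omega
        simp [lucasZ, this]
        intro h; exact absurd h (by omega)
      rw [neg _ (by omega), neg _ (by omega), neg _ (by omega)]
      have hrec : lucasNat (k + 3) = lucasNat (k + 2) + lucasNat (k + 1) := rfl
      rw [hrec]
      rw [pow_succ, pow_succ]
      ring

lemma lucasZ_add (m : ℤ) (n : ℕ) :
    lucasZ (m + n) = lucasZ m * lucasZ n - (-1) ^ n * lucasZ (m - n) := by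
  induction n using Nat.twoStepInduction with
  | zero =>
    have h0 : lucasZ (0 : ℤ) = 2 := rfl
    simp [h0]; ring
  | one =>
    have h1 : lucasZ (1 : ℤ) = 1 := rfl
    have := lucasZ_rec (m - 1)
    have e : m - 1 + 2 = m + 1 := by ring
    have e2 : m - 1 + 1 = m := by ring
    rw [e, e2] at this
    push_cast
    rw [this, h1]
    ring
  | more n ih0 ih1 =>
    have key : lucasZ (m + (n : ℤ) + 2) = lucasZ (m + (n : ℤ) + 1) + lucasZ (m + n) :=
      lucasZ_rec (m + n)
    have eN : lucasZ ((n : ℤ) + 2) = lucasZ ((n : ℤ) + 1) + lucasZ (n : ℤ) :=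
      lucasZ_rec (n : ℤ)
    have eM : lucasZ (m - n) = lucasZ (m - n - 1) + lucasZ (m - n - 2) := by
      have := lucasZ_rec (m - n - 2)
      have e : m - n - 2 + 2 = m - n := by ring
      have e2 : m - n - 2 + 1 = m - n - 1 := by ring
      rw [e, e2] at this
      exact this
    have c2 : (m + ((n : ℤ) + 2)) = m + (n : ℤ) + 2 := by ring
    push_cast
    rw [c2, key]
    have e1' : m + (n : ℤ) + 1 = m + ((n : ℤ) + 1) := by ring
    rw [e1']
    have ih1' : lucasZ (m + ((n:ℤ) + 1)) =
        lucasZ m * lucasZ ((n:ℤ) + 1) - (-1) ^ (n + 1) * lucasZ (m - ((n:ℤ) + 1)) := by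
      have := ih1
      push_cast at this
      convert this using 3 <;> ring
    rw [ih1', ih0, eN, eM]
    have em1 : m - ((n : ℤ) + 1) = m - n - 1 := by ring
    rw [em1]
    rw [pow_succ, pow_succ]
    ring

lemma lucasZ_key (N : ℕ) (hN : Even N) (x : ℤ) :
    lucasZ (x + 2 * N) ≡ -lucasZ x [ZMOD lucasZ N] := by
  have h1 : lucasZ (x + (N : ℤ) + N) =
      lucasZ (x + N) * lucasZ N - (-1) ^ N * lucasZ x := by
    have := lucasZ_add (x + N) N
    have e : x + (N:ℤ) - N = x := by ring
    rw [e] at this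
    exact this
  rw [hN.neg_one_pow] at h1
  have e2 : x + 2 * (N : ℤ) = x + N + N := by ring
  rw [e2, h1]
  have : lucasZ N ∣ (-lucasZ x) - (lucasZ (x + N) * lucasZ N - 1 * lucasZ x) :=
    ⟨-lucasZ (x + N), by ring⟩
  exact (Int.modEq_iff_dvd.mpr this)

lemma lucasZ_key' (N : ℕ) (hN : Even N) (x : ℤ) :
    lucasZ (x - 2 * N) ≡ -lucasZ x [ZMOD lucasZ N] := by
  have := lucasZ_key N hN (x - 2 * N)
  have e : x - 2 * (N : ℤ) + 2 * N = x := by ring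
  rw [e] at this
  simpa using this.symm.neg

theorem lucas_two_mul_mod_lucas_pow (j c : ℤ) (ℓ : ℕ) (hℓ : 1 ≤ ℓ) :
    lucasZ (2 * (j + c * 2 ^ ℓ)) ≡ (-1) ^ c.natAbs * lucasZ (2 * j)
      [ZMOD lucasZ (2 ^ ℓ)] := by
  have hpow : (2 : ℤ) ^ ℓ = ((2 ^ ℓ : ℕ) : ℤ) := by push_cast; ring
  set N : ℕ := 2 ^ ℓ with hNdef
  have hN : Even N := Nat.even_pow.mpr ⟨even_two, by omega⟩
  have hsign : ∀ c : ℤ, ((-1 : ℤ) ^ (c + 1).natAbs) = -((-1) ^ c.natAbs) ∧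
      ((-1 : ℤ) ^ (c - 1).natAbs) = -((-1) ^ c.natAbs) := by
    intro c
    rcases Int.even_or_odd c with hc | hc
    · have h1 : Odd (c + 1) := hc.add_one
      have h2 : Odd (c - 1) := by
        rcases hc with ⟨k, hk⟩; exact ⟨k - 1, by omega⟩
      rw [(Int.natAbs_even.mpr hc).neg_one_pow,
        (Int.natAbs_odd.mpr h1).neg_one_pow, (Int.natAbs_odd.mpr h2).neg_one_pow]
      norm_num
    · have h1 : Even (c + 1) := by rcases hc with ⟨k, hk⟩; exact ⟨k + 1, by omega⟩
      have h2 : Even (c - 1) := by rcases hc with ⟨k, hk⟩; exact ⟨k, by omega⟩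
      rw [(Int.natAbs_odd.mpr hc).neg_one_pow,
        (Int.natAbs_even.mpr h1).neg_one_pow, (Int.natAbs_even.mpr h2).neg_one_pow]
      norm_num
  rw [hpow]
  have main : ∀ c : ℤ, lucasZ (2 * j + c * (2 * N)) ≡ (-1) ^ c.natAbs * lucasZ (2 * j)
      [ZMOD lucasZ N] := by
    intro c
    induction c using Int.induction_on with
    | zero => simp
    | succ k ih =>
      have e : 2 * j + ((k : ℤ) + 1) * (2 * N) = (2 * j + k * (2 * N)) + 2 * N := by ring
      rw [e]
      have := (lucasZ_key N hN (2 * j + k * (2 * N))).trans ih.neg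
      rw [(hsign k).1]
      simpa using this
    | pred k ih =>
      have e : 2 * j + (-(k : ℤ) - 1) * (2 * N) = (2 * j + (-k) * (2 * N)) - 2 * N := by ring
      rw [e]
      have := (lucasZ_key' N hN (2 * j + (-(k:ℤ)) * (2 * N))).trans ih.neg
      rw [show (-(k:ℤ) - 1) = (-(k:ℤ)) - 1 from rfl, (hsign (-(k:ℤ))).2]
      simpa using this
  have e : 2 * (j + c * ((N : ℕ) : ℤ)) = 2 * j + c * (2 * N) := by push_cast; ring
  rw [e]
  exact main c
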